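/- Let (X_t)_{t=1}^T be adapted to a filtration (F_t) with E[X_t | F_{t-1}] = 0, and suppose L_t ≤ X_t ≤ U_t almost surely where L_t, U_t are F_{t-1}-measurable. Set S_t = ∑_{s≤t} X_s and V_t = ∑_{s≤t} (U_s - L_s)². Then for all b > 0 and c > 0, P(∃ t ≤ T : |S_t| ≥ b and V_t ≤ c²) ≤ 2·exp(-2b²/c²). -/

import Mathlib

open MeasureTheory ProbabilityTheory Real
open scoped ENNReal NNReal

section Auxiliary

/-- Core analytic inequality of Hoeffding's lemma. -/
lemma hoeff_core (p : ℝ) (hp0 : 0 ≤ p) (hp1 : p ≤ 1) (h : ℝ) :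
    -(p * h) + Real.log (1 - p + p * Real.exp h) ≤ h ^ 2 / 8 := by
  set g : ℝ → ℝ := fun t => 1 - p + p * Real.exp t with hg_def
  have hg_pos : ∀ t, 0 < g t := by
    intro t
    rcases eq_or_lt_of_le hp0 with h0 | h0
    · simp [hg_def, ← h0]
    · have : 0 < p * Real.exp t := mul_pos h0 (Real.exp_pos t)
      have : 0 ≤ 1 - p := by linarith
      simp only [hg_def]; nlinarith [Real.exp_pos t, mul_pos h0 (Real.exp_pos t)]
  set f : ℝ → ℝ := fun t => -(p * t) + Real.log (g t) with hf_def
  set f1 : ℝ → ℝ := fun t => -p + p * Real.exp t / g t with hf1_def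
  set f2 : ℝ → ℝ := fun t => p * Real.exp t * (1 - p) / (g t) ^ 2 with hf2_def
  have hgderiv : ∀ t, HasDerivAt g (p * Real.exp t) t := by
    intro t
    exact ((Real.hasDerivAt_exp t).const_mul p).const_add (1 - p)
  have hfderiv : ∀ t, HasDerivAt f (f1 t) t := by
    intro t
    have h1 : HasDerivAt (fun t : ℝ => Real.log (g t)) (p * Real.exp t / g t) t :=
      (hgderiv t).log (hg_pos t).ne'
    exact (((hasDerivAt_id t).const_mul p).neg.add h1).congr_deriv (by simp [hf1_def])
  have hf1deriv : ∀ t, HasDerivAt f1 (f2 t) t := by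
    intro t
    have h1 : HasDerivAt (fun t : ℝ => p * Real.exp t / g t)
        ((p * Real.exp t * g t - p * Real.exp t * (p * Real.exp t)) / (g t) ^ 2) t :=
      ((Real.hasDerivAt_exp t).const_mul p).div (hgderiv t) (hg_pos t).ne'
    have heq : (p * Real.exp t * g t - p * Real.exp t * (p * Real.exp t)) / (g t) ^ 2 = f2 t := by
      simp only [hf2_def, hg_def]; ring
    rw [heq] at h1
    exact ((hasDerivAt_const t (-p)).add h1).congr_deriv (by simp)
  have hf2_le : ∀ t, f2 t ≤ 1 / 4 := by
    intro t
    have h1 : p * Real.exp t * (1 - p) ≤ (g t) ^ 2 / 4 := by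
      have := sq_nonneg ((1 - p) - p * Real.exp t)
      simp only [hg_def]; nlinarith
    rw [hf2_def, div_le_iff₀ (pow_pos (hg_pos t) 2)]
    calc p * Real.exp t * (1 - p) ≤ (g t) ^ 2 / 4 := h1
    _ = 1 / 4 * g t ^ 2 := by ring
  -- φ t = t^2/8 - f t  has φ(0) = 0 and is minimized at 0
  set ψ : ℝ → ℝ := fun t => t / 4 - f1 t with hψ_def
  have hψderiv : ∀ t, HasDerivAt ψ (1 / 4 - f2 t) t := by
    intro t
    exact ((hasDerivAt_id t).div_const 4).sub (hf1deriv t)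
  have hψmono : Monotone ψ := by
    have : ∀ t, 0 ≤ 1 / 4 - f2 t := fun t => by linarith [hf2_le t]
    exact monotone_of_deriv_nonneg (fun t => (hψderiv t).differentiableAt)
      (fun t => by rw [(hψderiv t).deriv]; exact this t)
  have hψ0 : ψ 0 = 0 := by
    simp [hψ_def, hf1_def, hg_def]
  set φ : ℝ → ℝ := fun t => t ^ 2 / 8 - f t with hφ_def
  have hφderiv : ∀ t, HasDerivAt φ (ψ t) t := by
    intro t
    have h1 : HasDerivAt (fun t : ℝ => t ^ 2 / 8) (t / 4) t := by
      have := (hasDerivAt_pow 2 t).div_const 8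
      simpa using this.congr_deriv (by ring)
    exact h1.sub (hfderiv t)
  have hφ0 : φ 0 = 0 := by
    simp [hφ_def, hf_def, hg_def]
  have hφ_nonneg : ∀ t, 0 ≤ φ t := by
    intro t
    rcases le_total 0 t with ht | ht
    · have hmono : MonotoneOn φ (Set.Ici 0) := by
        refine monotoneOn_of_deriv_nonneg (convex_Ici 0)
          (fun x _ => (hφderiv x).differentiableAt.continuousAt.continuousWithinAt)
          (fun x hx => (hφderiv x).differentiableAt.differentiableWithinAt) ?_
        intro x hx
        rw [(hφderiv x).deriv]
        rw [← hψ0]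
        exact hψmono (le_of_lt (by simpa using hx))
      have := hmono (Set.mem_Ici.2 le_rfl) (Set.mem_Ici.2 ht) ht
      linarith [hφ0 ▸ this]
    · have hmono : AntitoneOn φ (Set.Iic 0) := by
        refine antitoneOn_of_deriv_nonpos (convex_Iic 0)
          (fun x _ => (hφderiv x).differentiableAt.continuousAt.continuousWithinAt)
          (fun x hx => (hφderiv x).differentiableAt.differentiableWithinAt) ?_
        intro x hx
        rw [(hφderiv x).deriv]
        rw [← hψ0]
        exact hψmono (le_of_lt (by simpa using hx))
      have := hmono (Set.mem_Iic.2 ht) (Set.mem_Iic.2 le_rfl) ht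
      linarith [hφ0 ▸ this]
  have := hφ_nonneg h
  simp only [hφ_def, hf_def] at this
  linarith

/-- Hoeffding bound on the chord value at `0`. -/
lemma hoeff_chord (l u lam : ℝ) (hl : l ≤ 0) (hu : 0 ≤ u) (hlu : l < u) :
    (u * Real.exp (lam * l) - l * Real.exp (lam * u)) / (u - l) ≤
      Real.exp (lam ^ 2 * (u - l) ^ 2 / 8) := by
  have hd : 0 < u - l := by linarith
  set p : ℝ := -l / (u - l) with hp_def
  have hp0 : 0 ≤ p := div_nonneg (by linarith) hd.le
  have hp1 : p ≤ 1 := by rw [hp_def, div_le_one hd]; linarith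
  set h : ℝ := lam * (u - l) with hh_def
  have hgpos : 0 < 1 - p + p * Real.exp h := by
    rcases eq_or_lt_of_le hp0 with h0 | h0
    · simp [← h0]
    · nlinarith [Real.exp_pos h, mul_pos h0 (Real.exp_pos h)]
  have key := hoeff_core p hp0 hp1 h
  have hLHS : (u * Real.exp (lam * l) - l * Real.exp (lam * u)) / (u - l)
      = Real.exp (-(p * h) + Real.log (1 - p + p * Real.exp h)) := by
    rw [Real.exp_add, Real.exp_log hgpos]
    have he : Real.exp (lam * u) = Real.exp (lam * l) * Real.exp h := by
      rw [← Real.exp_add, hh_def]; ring_nf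
    have hpl : -(p * h) = lam * l := by
      rw [hp_def, hh_def]; field_simp
    rw [hpl, he]
    field_simp [hp_def]
    have hp' : p * (u - l) = -l := by rw [hp_def, div_mul_cancel₀ _ hd.ne']
    linear_combination (1 - Real.exp h) * hp'
  rw [hLHS]
  apply Real.exp_le_exp.2
  calc -(p * h) + Real.log (1 - p + p * Real.exp h) ≤ h ^ 2 / 8 := key
  _ = lam ^ 2 * (u - l) ^ 2 / 8 := by rw [hh_def]; ring

/-- Pointwise chord bound for the exponential. -/
lemma exp_le_chord (l u lam x : ℝ) (hlu : l < u) (hxl : l ≤ x) (hxu : x ≤ u) :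
    Real.exp (lam * x) ≤ (u * Real.exp (lam * l) - l * Real.exp (lam * u)) / (u - l)
      + (Real.exp (lam * u) - Real.exp (lam * l)) / (u - l) * x := by
  have hd : 0 < u - l := by linarith
  set a : ℝ := (u - x) / (u - l) with ha_def
  set b : ℝ := (x - l) / (u - l) with hb_def
  have ha : 0 ≤ a := div_nonneg (by linarith) hd.le
  have hb : 0 ≤ b := div_nonneg (by linarith) hd.le
  have hab : a + b = 1 := by rw [ha_def, hb_def, ← add_div, div_eq_one_iff_eq hd.ne']; ring
  have hconv := convexOn_exp.2 (Set.mem_univ (lam * l)) (Set.mem_univ (lam * u)) ha hb hab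
  have h1 : a • (lam * l) + b • (lam * u) = lam * x := by
    simp only [smul_eq_mul, ha_def, hb_def]; field_simp; ring
  rw [h1] at hconv
  calc Real.exp (lam * x) ≤ a * Real.exp (lam * l) + b * Real.exp (lam * u) := by
        simpa using hconv
  _ = (u * Real.exp (lam * l) - l * Real.exp (lam * u)) / (u - l)
      + (Real.exp (lam * u) - Real.exp (lam * l)) / (u - l) * x := by
    simp only [ha_def, hb_def]; field_simp; ring

variable {Ω : Type*} {m0 : MeasurableSpace Ω}

/-- If `E[X | G] = 0` a.e. and `Lf ≤ X` a.e. with `Lf` being `G`-measurable, then `Lf ≤ 0` a.e. -/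
lemma ae_nonpos_of_condexp_zero (P : Measure Ω) [IsProbabilityMeasure P]
    {G : MeasurableSpace Ω} (hG : G ≤ m0) {X Lf : Ω → ℝ}
    (hX : Integrable X P) (hc : P[X|G] =ᵐ[P] 0)
    (hL : StronglyMeasurable[G] Lf) (hLX : ∀ᵐ ω ∂P, Lf ω ≤ X ω) :
    ∀ᵐ ω ∂P, Lf ω ≤ 0 := by
  letI : MeasurableSpace Ω := m0
  have hnull : ∀ n : ℕ, P {ω | 1 / (n + 1 : ℝ) ≤ Lf ω} = 0 := by
    intro n
    set A : Set Ω := {ω | 1 / (n + 1 : ℝ) ≤ Lf ω} with hA_def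
    have hAG : MeasurableSet[G] A := measurableSet_le measurable_const hL.measurable
    have hA : MeasurableSet[m0] A := hG _ hAG
    have h1 : ∫ ω in A, X ω ∂P = 0 := by
      rw [← setIntegral_condExp hG hX hAG]
      have : ∫ ω in A, (P[X|G]) ω ∂P = ∫ ω in A, (0 : Ω → ℝ) ω ∂P :=
        setIntegral_congr_ae hA (hc.mono fun ω hω _ => hω)
      simpa using this
    have h2 : (1 / (n + 1 : ℝ)) * (P A).toReal ≤ ∫ ω in A, X ω ∂P := by
      have hre : ∀ᵐ ω ∂P.restrict A, 1 / (n + 1 : ℝ) ≤ X ω := by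
        rw [ae_restrict_iff' hA]
        filter_upwards [hLX] with ω hω hmem
        exact le_trans hmem hω
      calc (1 / (n + 1 : ℝ)) * (P A).toReal = ∫ _ω in A, (1 / (n + 1 : ℝ)) ∂P := by
            rw [setIntegral_const]; rw [smul_eq_mul, mul_comm]; rfl
      _ ≤ ∫ ω in A, X ω ∂P :=
        setIntegral_mono_ae_restrict (integrable_const _).integrableOn
          hX.integrableOn hre
    have h3 : (P A).toReal ≤ 0 := by
      have hp : (0:ℝ) < 1 / (n + 1 : ℝ) := by positivity
      nlinarith [h2.trans_eq h1]
    have := le_antisymm h3 ENNReal.toReal_nonneg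
    exact (ENNReal.toReal_eq_zero_iff _).1 this |>.resolve_right (measure_ne_top P A)
  have hunion : {ω | 0 < Lf ω} ⊆ ⋃ n : ℕ, {ω | 1 / (n + 1 : ℝ) ≤ Lf ω} := by
    intro ω hω
    rw [Set.mem_setOf_eq] at hω
    obtain ⟨n, hn⟩ := exists_nat_one_div_lt hω
    exact Set.mem_iUnion.2 ⟨n, le_of_lt hn⟩
  have : P {ω | 0 < Lf ω} = 0 :=
    measure_mono_null hunion (measure_iUnion_null_iff.2 hnull)
  filter_upwards [measure_eq_zero_iff_ae_notMem.1 this] with ω hω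
  simpa using hω

/-- Conditional Hoeffding lemma. -/
lemma condexp_exp_le (P : Measure Ω) [IsProbabilityMeasure P]
    {G : MeasurableSpace Ω} (hG : G ≤ m0) (lam c : ℝ) {Y l u : Ω → ℝ}
    (hY : AEStronglyMeasurable[m0] Y P)
    (hl : StronglyMeasurable[G] l) (hu : StronglyMeasurable[G] u)
    (hbd : ∀ᵐ ω ∂P, l ω ≤ Y ω ∧ Y ω ≤ u ω ∧ l ω ≤ 0 ∧ 0 ≤ u ω ∧ u ω - l ω ≤ c)
    (hcond : P[Y|G] =ᵐ[P] 0) :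
    P[fun ω => Real.exp (lam * Y ω)|G] ≤ᵐ[P]
      fun ω => Real.exp (lam ^ 2 * (u ω - l ω) ^ 2 / 8) := by
  letI : MeasurableSpace Ω := m0
  classical
  have hc0 : 0 ≤ c := by
    rcases hbd.exists with ⟨ω, h1, h2, h3, h4, h5⟩
    linarith
  -- the chord coefficients
  set α : Ω → ℝ := fun ω => if l ω < u ω then
      (u ω * Real.exp (lam * l ω) - l ω * Real.exp (lam * u ω)) / (u ω - l ω) else 1 with hα_def
  set β : Ω → ℝ := fun ω => if l ω < u ω then
      (Real.exp (lam * u ω) - Real.exp (lam * l ω)) / (u ω - l ω) else 0 with hβ_def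
  have hltuG : MeasurableSet[G] {ω | l ω < u ω} := measurableSet_lt hl.measurable hu.measurable
  have hlm : Measurable[G] l := hl.measurable
  have hum : Measurable[G] u := hu.measurable
  have hel : Measurable[G] fun ω => Real.exp (lam * l ω) :=
    Real.measurable_exp.comp (hlm.const_mul lam)
  have heu : Measurable[G] fun ω => Real.exp (lam * u ω) :=
    Real.measurable_exp.comp (hum.const_mul lam)
  have hαG : StronglyMeasurable[G] α := by
    apply Measurable.stronglyMeasurable
    apply Measurable.ite hltuG
    · exact ((hum.mul hel).sub (hlm.mul heu)).div (hum.sub hlm)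
    · exact measurable_const
  have hβG : StronglyMeasurable[G] β := by
    apply Measurable.stronglyMeasurable
    apply Measurable.ite hltuG
    · exact (heu.sub hel).div (hum.sub hlm)
    · exact measurable_const
  -- key a.e. bounds
  have hYbd : ∀ᵐ ω ∂P, |Y ω| ≤ c := by
    filter_upwards [hbd] with ω ⟨h1, h2, h3, h4, h5⟩
    rw [abs_le]; constructor <;> linarith
  have hYint : Integrable Y P :=
    Integrable.mono' (integrable_const c) hY (hYbd.mono fun ω h => by rwa [Real.norm_eq_abs])
  have hαle : ∀ᵐ ω ∂P, α ω ≤ Real.exp (lam ^ 2 * (u ω - l ω) ^ 2 / 8) := by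
    filter_upwards [hbd] with ω ⟨h1, h2, h3, h4, h5⟩
    by_cases hlt : l ω < u ω
    · simp only [hα_def, if_pos hlt]
      exact hoeff_chord _ _ lam h3 h4 hlt
    · simp only [hα_def, if_neg hlt]
      exact Real.one_le_exp (by positivity)
  have hαnonneg : ∀ᵐ ω ∂P, 0 ≤ α ω := by
    filter_upwards [hbd] with ω ⟨h1, h2, h3, h4, h5⟩
    by_cases hlt : l ω < u ω
    · simp only [hα_def, if_pos hlt]
      apply div_nonneg _ (by linarith)
      have := Real.exp_pos (lam * l ω); have := Real.exp_pos (lam * u ω)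
      nlinarith
    · simp only [hα_def, if_neg hlt]; norm_num
  -- pointwise chord bound
  have hptwise : ∀ᵐ ω ∂P, Real.exp (lam * Y ω) ≤ α ω + β ω * Y ω := by
    filter_upwards [hbd] with ω ⟨h1, h2, h3, h4, h5⟩
    by_cases hlt : l ω < u ω
    · simp only [hα_def, hβ_def, if_pos hlt]
      exact exp_le_chord _ _ lam _ hlt h1 h2
    · have hle : u ω ≤ l ω := not_lt.1 hlt
      have h6 : l ω = 0 := le_antisymm h3 (by linarith)
      have h7 : Y ω = 0 := le_antisymm (by linarith) (by linarith [h1, h6])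
      simp [hα_def, hβ_def, if_neg hlt, h7]
  -- integrability of the affine majorant
  have hβY_bd : ∀ᵐ ω ∂P, ‖β ω * Y ω‖ ≤ 2 * Real.exp (|lam| * c) := by
    filter_upwards [hbd] with ω ⟨h1, h2, h3, h4, h5⟩
    by_cases hlt : l ω < u ω
    · simp only [hβ_def, if_pos hlt]
      have hd : 0 < u ω - l ω := by linarith
      have hY' : |Y ω| ≤ u ω - l ω := by rw [abs_le]; constructor <;> linarith
      have he1 : Real.exp (lam * u ω) ≤ Real.exp (|lam| * c) := by
        apply Real.exp_le_exp.2
        calc lam * u ω ≤ |lam * u ω| := le_abs_self _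
        _ = |lam| * |u ω| := abs_mul _ _
        _ ≤ |lam| * c := by
            apply mul_le_mul_of_nonneg_left _ (abs_nonneg lam)
            rw [abs_of_nonneg h4]; linarith
      have he2 : Real.exp (lam * l ω) ≤ Real.exp (|lam| * c) := by
        apply Real.exp_le_exp.2
        calc lam * l ω ≤ |lam * l ω| := le_abs_self _
        _ = |lam| * |l ω| := abs_mul _ _
        _ ≤ |lam| * c := by
            apply mul_le_mul_of_nonneg_left _ (abs_nonneg lam)
            rw [abs_of_nonpos h3]; linarith
      rw [norm_mul, Real.norm_eq_abs, Real.norm_eq_abs, abs_div]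
      rw [abs_of_pos hd]
      calc |Real.exp (lam * u ω) - Real.exp (lam * l ω)| / (u ω - l ω) * |Y ω|
          ≤ |Real.exp (lam * u ω) - Real.exp (lam * l ω)| / (u ω - l ω) * (u ω - l ω) := by
            apply mul_le_mul_of_nonneg_left hY' (by positivity)
      _ = |Real.exp (lam * u ω) - Real.exp (lam * l ω)| := by field_simp
      _ ≤ 2 * Real.exp (|lam| * c) := by
          rw [abs_sub_le_iff]
          constructor <;> nlinarith [Real.exp_pos (lam * u ω), Real.exp_pos (lam * l ω)]
    · simp only [hβ_def, if_neg hlt]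
      simp only [zero_mul, norm_zero]
      positivity
  have hαβY_int : Integrable (fun ω => α ω + β ω * Y ω) P := by
    apply Integrable.mono' (integrable_const (Real.exp (lam ^ 2 * c ^ 2 / 8) + 2 * Real.exp (|lam| * c)))
    · exact ((hαG.mono hG).aestronglyMeasurable.add
        (((hβG.mono hG).aestronglyMeasurable.mul hY)))
    · filter_upwards [hbd, hαle, hαnonneg, hβY_bd] with ω hb hle hnn hβb
      obtain ⟨h1, h2, h3, h4, h5⟩ := hb
      have : α ω ≤ Real.exp (lam ^ 2 * c ^ 2 / 8) := by
        apply hle.trans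
        apply Real.exp_le_exp.2
        have : (u ω - l ω) ^ 2 ≤ c ^ 2 := by nlinarith
        nlinarith [sq_nonneg lam]
      rw [Real.norm_eq_abs]
      calc |α ω + β ω * Y ω| ≤ |α ω| + |β ω * Y ω| := abs_add_le _ _
      _ ≤ Real.exp (lam ^ 2 * c ^ 2 / 8) + 2 * Real.exp (|lam| * c) := by
          rw [abs_of_nonneg hnn]
          exact add_le_add this (by rwa [Real.norm_eq_abs] at hβb)
  have hexpint : Integrable (fun ω => Real.exp (lam * Y ω)) P := by
    apply Integrable.mono' (integrable_const (Real.exp (|lam| * c)))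
    · exact Real.continuous_exp.comp_aestronglyMeasurable (hY.const_mul lam)
    · filter_upwards [hYbd] with ω h
      rw [Real.norm_eq_abs, abs_of_pos (Real.exp_pos _)]
      apply Real.exp_le_exp.2
      calc lam * Y ω ≤ |lam * Y ω| := le_abs_self _
      _ = |lam| * |Y ω| := abs_mul _ _
      _ ≤ |lam| * c := mul_le_mul_of_nonneg_left h (abs_nonneg lam)
  have hαint : Integrable α P := by
    apply Integrable.mono' (integrable_const (Real.exp (lam ^ 2 * c ^ 2 / 8)))
    · exact (hαG.mono hG).aestronglyMeasurable
    · filter_upwards [hbd, hαle, hαnonneg] with ω hb hle hnn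
      obtain ⟨h1, h2, h3, h4, h5⟩ := hb
      rw [Real.norm_eq_abs, abs_of_nonneg hnn]
      apply hle.trans
      apply Real.exp_le_exp.2
      have : (u ω - l ω) ^ 2 ≤ c ^ 2 := by nlinarith
      nlinarith [sq_nonneg lam]
  have hβYint : Integrable (fun ω => β ω * Y ω) P := by
    apply Integrable.mono' (integrable_const (2 * Real.exp (|lam| * c)))
    · exact (hβG.mono hG).aestronglyMeasurable.mul hY
    · exact hβY_bd
  -- conditional expectation computation
  have step1 : P[fun ω => Real.exp (lam * Y ω)|G] ≤ᵐ[P] P[fun ω => α ω + β ω * Y ω|G] :=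
    condExp_mono hexpint hαβY_int hptwise
  have step2 : P[fun ω => α ω + β ω * Y ω|G] =ᵐ[P] fun ω => α ω + (β * P[Y|G]) ω := by
    have h1 : P[fun ω => α ω + β ω * Y ω|G] =ᵐ[P] P[α|G] + P[β * Y|G] := condExp_add hαint hβYint G
    have h2 : P[α|G] = α := condExp_of_stronglyMeasurable hG hαG hαint
    have h3 : P[β * Y|G] =ᵐ[P] β * P[Y|G] := condExp_mul_of_stronglyMeasurable_left hβG hβYint hYint
    filter_upwards [h1, h3] with ω hω1 hω3
    rw [hω1]; simp only [Pi.add_apply, h2]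
    rw [hω3]
  have step3 : (fun ω => α ω + (β * P[Y|G]) ω) =ᵐ[P] α := by
    filter_upwards [hcond] with ω hω
    simp only [Pi.mul_apply, hω]
    simp
  calc P[fun ω => Real.exp (lam * Y ω)|G]
      ≤ᵐ[P] P[fun ω => α ω + β ω * Y ω|G] := step1
  _ =ᵐ[P] α := step2.trans step3
  _ ≤ᵐ[P] fun ω => Real.exp (lam ^ 2 * (u ω - l ω) ^ 2 / 8) := hαle

lemma oneSided (P : Measure Ω) [IsProbabilityMeasure P] (F : Filtration ℕ m0) (T : ℕ)
    (X L U : ℕ → Ω → ℝ) (hadapted : Adapted F X)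
    (hint : ∀ t, Integrable (X t) P)
    (hcond : ∀ t ∈ Finset.Icc 1 T, P[X t | F (t - 1)] =ᵐ[P] 0)
    (hLpred : ∀ t ∈ Finset.Icc 1 T, StronglyMeasurable[F (t - 1)] (L t))
    (hUpred : ∀ t ∈ Finset.Icc 1 T, StronglyMeasurable[F (t - 1)] (U t))
    (hbound : ∀ t ∈ Finset.Icc 1 T, ∀ᵐ ω ∂P, L t ω ≤ X t ω ∧ X t ω ≤ U t ω)
    (b c : ℝ) (hb : 0 < b) (hc : 0 < c) :
    P {ω | ∃ t ∈ Finset.Icc 1 T,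
        b ≤ ∑ s ∈ Finset.Icc 1 t, X s ω ∧
        ∑ s ∈ Finset.Icc 1 t, (U s ω - L s ω) ^ 2 ≤ c ^ 2} ≤
      ENNReal.ofReal (Real.exp (-2 * b ^ 2 / c ^ 2)) := by
  classical
  set lam : ℝ := 4 * b / c ^ 2 with hlam_def
  have hlam : 0 < lam := by positivity
  set V : ℕ → Ω → ℝ := fun t ω => ∑ s ∈ Finset.Icc 1 t, (U s ω - L s ω) ^ 2 with hV_def
  set X' : ℕ → Ω → ℝ :=
    fun t ω => if t ∈ Finset.Icc 1 T ∧ V t ω ≤ c ^ 2 then X t ω else 0 with hX'_def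
  set D : ℕ → Ω → ℝ :=
    fun t ω => if t ∈ Finset.Icc 1 T ∧ V t ω ≤ c ^ 2 then (U t ω - L t ω) ^ 2 else 0 with hD_def
  set S' : ℕ → Ω → ℝ := fun t ω => ∑ s ∈ Finset.Icc 1 t, X' s ω with hS'_def
  set V' : ℕ → Ω → ℝ := fun t ω => ∑ s ∈ Finset.Icc 1 t, D s ω with hV'_def
  set f : ℕ → Ω → ℝ := fun t ω => Real.exp (lam * S' t ω) with hf_def
  set M : ℕ → Ω → ℝ := fun t ω => Real.exp (lam * S' t ω - lam ^ 2 / 8 * V' t ω) with hM_def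
  -- monotonicity of V
  have hVmono : ∀ s t : ℕ, s ≤ t → ∀ ω, V s ω ≤ V t ω := by
    intro s t hst ω
    exact Finset.sum_le_sum_of_subset_of_nonneg
      (Finset.Icc_subset_Icc_right hst) (fun i _ _ => sq_nonneg _)
  -- measurability of V
  have hVmeas : ∀ t ∈ Finset.Icc 1 T, StronglyMeasurable[F (t - 1)] (V t) := by
    intro t ht
    apply Measurable.stronglyMeasurable
    apply Finset.measurable_sum
    intro s hs
    have hs1 : s ∈ Finset.Icc 1 T := by
      simp only [Finset.mem_Icc] at *
      exact ⟨hs.1, hs.2.trans ht.2⟩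
    have hmle : F (s - 1) ≤ F (t - 1) := F.mono (Nat.sub_le_sub_right
      (by simp only [Finset.mem_Icc] at hs; exact hs.2) 1)
    exact ((((hUpred s hs1).sub (hLpred s hs1)).measurable.pow_const 2).mono hmle le_rfl)
  have hCmeas : ∀ t ∈ Finset.Icc 1 T, MeasurableSet[F (t - 1)] {ω | V t ω ≤ c ^ 2} :=
    fun t ht => measurableSet_le (hVmeas t ht).measurable measurable_const
  -- measurability of X'
  have hX'meas : ∀ t, StronglyMeasurable[F t] (X' t) := by
    intro t
    by_cases ht : t ∈ Finset.Icc 1 T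
    · have : X' t = fun ω => if V t ω ≤ c ^ 2 then X t ω else 0 := by
        funext ω; simp only [hX'_def, ht, true_and]
      rw [this]
      exact StronglyMeasurable.ite
        ((F.mono (Nat.sub_le t 1)) _ (hCmeas t ht)) (hadapted t).stronglyMeasurable stronglyMeasurable_const
    · have : X' t = fun _ => (0:ℝ) := by
        funext ω; simp only [hX'_def, ht, false_and, if_false]
      rw [this]; exact stronglyMeasurable_const
  have hX'meas' : ∀ s t : ℕ, s ≤ t → StronglyMeasurable[F t] (X' s) :=
    fun s t hst => (hX'meas s).mono (F.mono hst)
  -- measurability of D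
  have hDmeas : ∀ t, t ∈ Finset.Icc 1 T → StronglyMeasurable[F (t - 1)] (D t) := by
    intro t ht
    have : D t = fun ω => if V t ω ≤ c ^ 2 then (U t ω - L t ω) ^ 2 else 0 := by
      funext ω; simp only [hD_def, ht, true_and]
    rw [this]
    exact StronglyMeasurable.ite (hCmeas t ht)
      (((hUpred t ht).sub (hLpred t ht)).measurable.pow_const 2).stronglyMeasurable
      stronglyMeasurable_const
  have hDmeas' : ∀ s t : ℕ, s ≤ t → StronglyMeasurable[F t] (D s) := by
    intro s t hst
    by_cases hs : s ∈ Finset.Icc 1 T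
    · exact ((hDmeas s hs).mono (F.mono ((Nat.sub_le s 1).trans hst)))
    · have : D s = fun _ => (0:ℝ) := by
        funext ω; simp only [hD_def, hs, false_and, if_false]
      rw [this]; exact stronglyMeasurable_const
  have hS'meas : ∀ t, StronglyMeasurable[F t] (S' t) := by
    intro t
    apply Measurable.stronglyMeasurable
    apply Finset.measurable_sum
    intro s hs
    exact (hX'meas' s t (by simp only [Finset.mem_Icc] at hs; exact hs.2)).measurable
  have hV'meas : ∀ t, StronglyMeasurable[F t] (V' t) := by
    intro t
    apply Measurable.stronglyMeasurable
    apply Finset.measurable_sum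
    intro s hs
    exact (hDmeas' s t (by simp only [Finset.mem_Icc] at hs; exact hs.2)).measurable
  have hfmeas : ∀ t, StronglyMeasurable[F t] (f t) :=
    fun t => Real.continuous_exp.comp_stronglyMeasurable ((hS'meas t).const_mul lam)
  have hMmeas : ∀ t, StronglyMeasurable[F t] (M t) :=
    fun t => Real.continuous_exp.comp_stronglyMeasurable
      (((hS'meas t).const_mul lam).sub ((hV'meas t).const_mul (lam ^ 2 / 8)))
  -- a.e. bounds
  have hL0 : ∀ t ∈ Finset.Icc 1 T, ∀ᵐ ω ∂P, L t ω ≤ 0 := by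
    intro t ht
    exact ae_nonpos_of_condexp_zero P (F.le (t-1)) (hint t) (hcond t ht) (hLpred t ht)
      ((hbound t ht).mono fun ω h => h.1)
  have hU0 : ∀ t ∈ Finset.Icc 1 T, ∀ᵐ ω ∂P, 0 ≤ U t ω := by
    intro t ht
    have hcneg : P[-X t|F (t-1)] =ᵐ[P] 0 := by
      refine (condExp_neg (X t) _).trans ?_
      filter_upwards [hcond t ht] with ω hω
      simp only [Pi.neg_apply, hω, Pi.zero_apply, neg_zero]
    have := ae_nonpos_of_condexp_zero P (F.le (t-1)) (hint t).neg hcneg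
      ((hUpred t ht).neg) ((hbound t ht).mono fun ω h => by
        simp only [Pi.neg_apply]; linarith [h.2])
    filter_upwards [this] with ω hω
    simp only [Pi.neg_apply] at hω; linarith
  have aeFin : ∀ {p : ℕ → Ω → Prop} (s : Finset ℕ), (∀ t ∈ s, ∀ᵐ ω ∂P, p t ω) →
      ∀ᵐ ω ∂P, ∀ t ∈ s, p t ω := by
    intro p s h
    exact (ae_ball_iff s.countable_toSet).2 h
  have hbdall : ∀ᵐ ω ∂P, ∀ t ∈ Finset.Icc 1 T,
      L t ω ≤ X t ω ∧ X t ω ≤ U t ω ∧ L t ω ≤ 0 ∧ 0 ≤ U t ω := by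
    refine aeFin _ fun t ht => ?_
    filter_upwards [hbound t ht, hL0 t ht, hU0 t ht] with ω h1 h2 h3
    exact ⟨h1.1, h1.2, h2, h3⟩
  -- (U t - L t)^2 ≤ c^2 whenever the indicator fires
  have hterm : ∀ t ∈ Finset.Icc 1 T, ∀ ω, V t ω ≤ c ^ 2 → (U t ω - L t ω) ^ 2 ≤ c ^ 2 := by
    intro t ht ω hV
    refine le_trans ?_ hV
    exact Finset.single_le_sum (f := fun s => (U s ω - L s ω) ^ 2)
      (fun i _ => sq_nonneg _) (by simp only [Finset.mem_Icc] at *; exact ⟨ht.1, le_rfl⟩)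
  have hX'bd : ∀ t, ∀ᵐ ω ∂P, |X' t ω| ≤ c := by
    intro t
    filter_upwards [hbdall] with ω hω
    by_cases h : t ∈ Finset.Icc 1 T ∧ V t ω ≤ c ^ 2
    · simp only [hX'_def, if_pos h]
      obtain ⟨h1, h2, h3, h4⟩ := hω t h.1
      have h5 := hterm t h.1 ω h.2
      have h6 : U t ω - L t ω ≤ c := by nlinarith
      rw [abs_le]; constructor <;> linarith
    · simp only [hX'_def, if_neg h, abs_zero]; linarith
  have hX'int : ∀ t, Integrable (X' t) P := by
    intro t
    refine Integrable.mono' (integrable_const c)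
      ((hX'meas t).mono (F.le t)).aestronglyMeasurable ?_
    filter_upwards [hX'bd t] with ω h; rwa [Real.norm_eq_abs]
  have hDnonneg : ∀ t ω, 0 ≤ D t ω := by
    intro t ω; simp only [hD_def]
    split <;> [exact sq_nonneg _; exact le_rfl]
  have hV'nonneg : ∀ t ω, 0 ≤ V' t ω :=
    fun t ω => Finset.sum_nonneg fun s _ => hDnonneg s ω
  have hS'bd : ∀ t, ∀ᵐ ω ∂P, |S' t ω| ≤ t * c := by
    intro t
    have : ∀ᵐ ω ∂P, ∀ s ∈ Finset.Icc 1 t, |X' s ω| ≤ c :=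
      aeFin _ fun s _ => hX'bd s
    filter_upwards [this] with ω hω
    calc |S' t ω| ≤ ∑ s ∈ Finset.Icc 1 t, |X' s ω| := Finset.abs_sum_le_sum_abs _ _
    _ ≤ ∑ _s ∈ Finset.Icc 1 t, c := Finset.sum_le_sum hω
    _ = (t : ℝ) * c := by
        rw [Finset.sum_const, Nat.card_Icc]
        simp [nsmul_eq_mul]
  have hfint : ∀ t, Integrable (f t) P := by
    intro t
    refine Integrable.mono' (integrable_const (Real.exp (lam * (t * c))))
      ((hfmeas t).mono (F.le t)).aestronglyMeasurable ?_
    filter_upwards [hS'bd t] with ω h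
    rw [Real.norm_eq_abs, abs_of_pos (Real.exp_pos _)]
    apply Real.exp_le_exp.2
    apply mul_le_mul_of_nonneg_left _ hlam.le
    exact (le_abs_self _).trans h
  have hMint : ∀ t, Integrable (M t) P := by
    intro t
    refine Integrable.mono' (integrable_const (Real.exp (lam * (t * c))))
      ((hMmeas t).mono (F.le t)).aestronglyMeasurable ?_
    filter_upwards [hS'bd t] with ω h
    rw [Real.norm_eq_abs, abs_of_pos (Real.exp_pos _)]
    apply Real.exp_le_exp.2
    have h1 : lam * S' t ω ≤ lam * (t * c) :=
      mul_le_mul_of_nonneg_left ((le_abs_self _).trans h) hlam.le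
    nlinarith [hV'nonneg t ω, sq_nonneg lam]
  -- conditional expectation of X' vanishes
  have hcond' : ∀ i : ℕ, (i + 1) ∈ Finset.Icc 1 T → P[X' (i+1)|F i] =ᵐ[P] 0 := by
    intro i hi
    set g : Ω → ℝ := fun ω => if V (i+1) ω ≤ c ^ 2 then (1:ℝ) else 0 with hg_def
    have hgmeas : StronglyMeasurable[F i] g := by
      have := hCmeas (i+1) hi
      rw [Nat.add_sub_cancel] at this
      exact StronglyMeasurable.ite this stronglyMeasurable_const stronglyMeasurable_const
    have hX'eq : X' (i+1) = g * X (i+1) := by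
      funext ω
      simp only [hX'_def, hg_def, Pi.mul_apply, hi, true_and]
      split <;> simp
    have hpull := condExp_mul_of_stronglyMeasurable_left (μ := P) (m := F i) hgmeas
      (hX'eq ▸ hX'int (i+1)) (hint (i+1))
    have hczero : P[X (i+1)|F i] =ᵐ[P] 0 := by
      have := hcond (i+1) hi
      rwa [Nat.add_sub_cancel] at this
    rw [hX'eq]
    refine hpull.trans ?_
    filter_upwards [hczero] with ω hω
    simp only [Pi.mul_apply, hω, Pi.zero_apply, mul_zero]
  -- the submartingale property of f
  have hstep : ∀ i : ℕ, f i ≤ᵐ[P] P[f (i + 1)|F i] := by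
    intro i
    have hsum : ∀ ω, S' (i+1) ω = S' i ω + X' (i+1) ω := by
      intro ω
      exact Finset.sum_Icc_succ_top (Nat.succ_le_succ (Nat.zero_le i)) _
    by_cases hi : (i+1) ∈ Finset.Icc 1 T
    · have hfiX'int : Integrable (fun ω => f i ω * X' (i+1) ω) P := by
        refine Integrable.mono' (integrable_const (Real.exp (lam * (i * c)) * c))
          (((hfmeas i).mono (F.le i)).aestronglyMeasurable.mul
            ((hX'meas (i+1)).mono (F.le _)).aestronglyMeasurable) ?_
        filter_upwards [hS'bd i, hX'bd (i+1)] with ω h1 h2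
        rw [norm_mul, Real.norm_eq_abs, Real.norm_eq_abs, abs_of_pos (Real.exp_pos _)]
        apply mul_le_mul _ h2 (abs_nonneg _) (Real.exp_nonneg _)
        apply Real.exp_le_exp.2
        exact mul_le_mul_of_nonneg_left ((le_abs_self _).trans h1) hlam.le
      have hg0int : Integrable (fun ω => f i ω + lam * (f i ω * X' (i+1) ω)) P :=
        (hfint i).add (hfiX'int.const_mul lam)
      have hptw : ∀ ω, f i ω + lam * (f i ω * X' (i+1) ω) ≤ f (i+1) ω := by
        intro ω
        have h1 : f (i+1) ω = f i ω * Real.exp (lam * X' (i+1) ω) := by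
          simp only [hf_def]
          rw [← Real.exp_add, hsum ω]; ring_nf
        rw [h1]
        have h2 : 1 + lam * X' (i+1) ω ≤ Real.exp (lam * X' (i+1) ω) := by
          have := Real.add_one_le_exp (lam * X' (i+1) ω); linarith
        have h3 : 0 ≤ f i ω := (Real.exp_pos _).le
        nlinarith
      have hmono := condExp_mono (μ := P) (m := F i) hg0int (hfint (i+1))
        (Filter.Eventually.of_forall hptw)
      have hdecomp : P[fun ω => f i ω + lam * (f i ω * X' (i+1) ω)|F i] =ᵐ[P] f i := by
        have h1 : (fun ω => f i ω + lam * (f i ω * X' (i+1) ω)) =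
            f i + lam • (fun ω => f i ω * X' (i+1) ω) := by
          funext ω; simp [Pi.add_apply, Pi.smul_apply, smul_eq_mul]
        rw [h1]
        refine (condExp_add (hfint i) (hfiX'int.smul lam) _).trans ?_
        have h2 : P[f i|F i] = f i :=
          condExp_of_stronglyMeasurable (F.le i) (hfmeas i) (hfint i)
        have h3 : P[lam • fun ω => f i ω * X' (i+1) ω|F i] =ᵐ[P]
            lam • P[fun ω => f i ω * X' (i+1) ω|F i] := condExp_smul lam _ _
        have h4 : P[fun ω => f i ω * X' (i+1) ω|F i] =ᵐ[P] f i * P[X' (i+1)|F i] := by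
          have := condExp_mul_of_stronglyMeasurable_left (μ := P) (m := F i) (hfmeas i)
            (g := X' (i+1)) hfiX'int (hX'int (i+1))
          exact this
        filter_upwards [h3, h4, hcond' i hi] with ω hω3 hω4 hω5
        simp only [Pi.add_apply, h2]
        rw [hω3]
        simp only [Pi.smul_apply, hω4, Pi.mul_apply, hω5, Pi.zero_apply,
          mul_zero, smul_eq_mul, add_zero]
      filter_upwards [hmono, hdecomp] with ω h1 h2
      rw [← h2]; exact h1
    · have hX'z : X' (i+1) = fun _ => (0:ℝ) := by
        funext ω; simp only [hX'_def, hi, false_and, if_false]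
      have hfeq : f (i+1) = f i := by
        funext ω; simp only [hf_def]
        rw [hsum ω, hX'z]; simp
      rw [hfeq, condExp_of_stronglyMeasurable (F.le i) (hfmeas i) (hfint i)]
  have hsubmart : Submartingale f F P := submartingale_nat hfmeas hfint hstep
  -- the exponential of X' is integrable
  have hexpX'int : ∀ t, Integrable (fun ω => Real.exp (lam * X' t ω)) P := by
    intro t
    refine Integrable.mono' (integrable_const (Real.exp (lam * c)))
      (Real.continuous_exp.comp_aestronglyMeasurable
        (((hX'meas t).mono (F.le t)).aestronglyMeasurable.const_mul lam)) ?_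
    filter_upwards [hX'bd t] with ω h
    rw [Real.norm_eq_abs, abs_of_pos (Real.exp_pos _)]
    exact Real.exp_le_exp.2 (mul_le_mul_of_nonneg_left ((le_abs_self _).trans h) hlam.le)
  -- integral of M is at most one
  have hMle : ∀ t, ∫ ω, M t ω ∂P ≤ 1 := by
    intro t
    induction t with
    | zero =>
      have hM0 : M 0 = fun _ => (1:ℝ) := by
        funext ω
        simp [hM_def, hS'_def, hV'_def]
      rw [hM0]
      simp
    | succ t ih =>
      have hsumS : ∀ ω, S' (t+1) ω = S' t ω + X' (t+1) ω := by
        intro ω; exact Finset.sum_Icc_succ_top (Nat.succ_le_succ (Nat.zero_le t)) _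
      have hsumV : ∀ ω, V' (t+1) ω = V' t ω + D (t+1) ω := by
        intro ω; exact Finset.sum_Icc_succ_top (Nat.succ_le_succ (Nat.zero_le t)) _
      by_cases hi : (t+1) ∈ Finset.Icc 1 T
      · set W : Ω → ℝ := fun ω => M t ω * Real.exp (-(lam ^ 2 / 8 * D (t+1) ω)) with hW_def
        have hDt1 : StronglyMeasurable[F t] (D (t+1)) := by
          have := hDmeas (t+1) hi
          rwa [Nat.add_sub_cancel] at this
        have hWmeas : StronglyMeasurable[F t] W :=
          (hMmeas t).mul (Real.continuous_exp.comp_stronglyMeasurable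
            ((hDt1.const_mul (lam ^ 2 / 8)).neg))
        have hMeq : M (t+1) = W * fun ω => Real.exp (lam * X' (t+1) ω) := by
          funext ω
          simp only [hW_def, hM_def, Pi.mul_apply]
          rw [mul_assoc, ← Real.exp_add, ← Real.exp_add, hsumS ω, hsumV ω]
          ring_nf
        have hpull := condExp_mul_of_stronglyMeasurable_left (μ := P) (m := F t) hWmeas
          (hMeq ▸ hMint (t+1)) (hexpX'int (t+1))
        -- conditional Hoeffding bound
        set l : Ω → ℝ := fun ω => if V (t+1) ω ≤ c ^ 2 then L (t+1) ω else 0 with hl_def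
        set u : Ω → ℝ := fun ω => if V (t+1) ω ≤ c ^ 2 then U (t+1) ω else 0 with hu_def
        have hC1 : MeasurableSet[F t] {ω | V (t+1) ω ≤ c ^ 2} := by
          have := hCmeas (t+1) hi; rwa [Nat.add_sub_cancel] at this
        have hlmeas : StronglyMeasurable[F t] l := by
          apply StronglyMeasurable.ite hC1 _ stronglyMeasurable_const
          have := hLpred (t+1) hi; rwa [Nat.add_sub_cancel] at this
        have humeas : StronglyMeasurable[F t] u := by
          apply StronglyMeasurable.ite hC1 _ stronglyMeasurable_const
          have := hUpred (t+1) hi; rwa [Nat.add_sub_cancel] at this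
        have hbd2 : ∀ᵐ ω ∂P, l ω ≤ X' (t+1) ω ∧ X' (t+1) ω ≤ u ω ∧ l ω ≤ 0 ∧ 0 ≤ u ω ∧
            u ω - l ω ≤ c := by
          filter_upwards [hbdall] with ω hω
          obtain ⟨h1, h2, h3, h4⟩ := hω (t+1) hi
          by_cases h : V (t+1) ω ≤ c ^ 2
          · have h5 := hterm (t+1) hi ω h
            have h6 : U (t+1) ω - L (t+1) ω ≤ c := by nlinarith
            simp only [hl_def, hu_def, hX'_def, if_pos h, hi, true_and]
            exact ⟨h1, h2, h3, h4, h6⟩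
          · simp only [hl_def, hu_def, hX'_def, if_neg h, hi, true_and, and_false, if_false]
            refine ⟨le_rfl, le_rfl, le_rfl, le_rfl, by linarith⟩
        have hhoeff := condexp_exp_le P (F.le t) lam c
          ((hX'meas (t+1)).mono (F.le _)).aestronglyMeasurable hlmeas humeas hbd2
          (hcond' t hi)
        have hul : ∀ ω, lam ^ 2 * (u ω - l ω) ^ 2 / 8 = lam ^ 2 / 8 * D (t+1) ω := by
          intro ω
          simp only [hl_def, hu_def, hD_def, hi, true_and]
          by_cases h : V (t+1) ω ≤ c ^ 2
          · simp only [if_pos h]; ring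
          · simp only [if_neg h]; ring
        have hWnonneg : ∀ ω, 0 ≤ W ω := by
          intro ω
          exact mul_nonneg (Real.exp_pos _).le (Real.exp_pos _).le
        have hle : P[M (t+1)|F t] ≤ᵐ[P] M t := by
          filter_upwards [hpull, hhoeff] with ω h1 h2
          rw [hMeq, h1]
          simp only [Pi.mul_apply]
          calc W ω * (P[fun ω => Real.exp (lam * X' (t+1) ω)|F t]) ω
              ≤ W ω * Real.exp (lam ^ 2 * (u ω - l ω) ^ 2 / 8) :=
                mul_le_mul_of_nonneg_left h2 (hWnonneg ω)
          _ = M t ω := by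
              rw [hul ω]
              simp only [hW_def]
              rw [mul_assoc, ← Real.exp_add]
              simp
        calc ∫ ω, M (t+1) ω ∂P = ∫ ω, (P[M (t+1)|F t]) ω ∂P :=
              (integral_condExp (F.le t)).symm
        _ ≤ ∫ ω, M t ω ∂P := integral_mono_ae integrable_condExp (hMint t) hle
        _ ≤ 1 := ih
      · have hMeq : M (t+1) = M t := by
          funext ω
          have hX'z : X' (t+1) ω = 0 := by simp only [hX'_def, hi, false_and, if_false]
          have hDz : D (t+1) ω = 0 := by simp only [hD_def, hi, false_and, if_false]
          simp only [hM_def]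
          rw [hsumS ω, hsumV ω, hX'z, hDz]
          ring_nf
        rw [hMeq]; exact ih
  -- V' T is bounded by c^2 everywhere
  have hV'T : ∀ ω, V' T ω ≤ c ^ 2 := by
    intro ω
    have hrw : V' T ω = ∑ s ∈ (Finset.Icc 1 T).filter (fun s => V s ω ≤ c ^ 2),
        (U s ω - L s ω) ^ 2 := by
      rw [Finset.sum_filter]
      refine Finset.sum_congr rfl fun s hs => ?_
      simp only [hD_def, hs, true_and]
    rw [hrw]
    rcases Finset.eq_empty_or_nonempty
      ((Finset.Icc 1 T).filter (fun s => V s ω ≤ c ^ 2)) with he | hne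
    · rw [he]; simp; positivity
    · set m := ((Finset.Icc 1 T).filter (fun s => V s ω ≤ c ^ 2)).max' hne with hm_def
      have hmmem := ((Finset.Icc 1 T).filter (fun s => V s ω ≤ c ^ 2)).max'_mem hne
      rw [Finset.mem_filter] at hmmem
      have hsub : (Finset.Icc 1 T).filter (fun s => V s ω ≤ c ^ 2) ⊆ Finset.Icc 1 m := by
        intro s hs
        rw [Finset.mem_filter] at hs
        rw [Finset.mem_Icc]
        refine ⟨(Finset.mem_Icc.1 hs.1).1, Finset.le_max' _ _ ?_⟩
        rw [Finset.mem_filter]; exact hs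
      calc ∑ s ∈ (Finset.Icc 1 T).filter (fun s => V s ω ≤ c ^ 2), (U s ω - L s ω) ^ 2
          ≤ ∑ s ∈ Finset.Icc 1 m, (U s ω - L s ω) ^ 2 :=
            Finset.sum_le_sum_of_subset_of_nonneg hsub (fun i _ _ => sq_nonneg _)
      _ = V m ω := rfl
      _ ≤ c ^ 2 := hmmem.2
  -- final: Doob's maximal inequality
  have hfTbd : ∀ ω, f T ω ≤ Real.exp (lam ^ 2 * c ^ 2 / 8) * M T ω := by
    intro ω
    have : f T ω = M T ω * Real.exp (lam ^ 2 / 8 * V' T ω) := by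
      simp only [hf_def, hM_def]
      rw [← Real.exp_add]; ring_nf
    rw [this, mul_comm]
    apply mul_le_mul_of_nonneg_right _ (Real.exp_pos _).le
    apply Real.exp_le_exp.2
    calc lam ^ 2 / 8 * V' T ω ≤ lam ^ 2 / 8 * c ^ 2 :=
          mul_le_mul_of_nonneg_left (hV'T ω) (by positivity)
    _ = lam ^ 2 * c ^ 2 / 8 := by ring
  have hintfT : ∫ ω, f T ω ∂P ≤ Real.exp (lam ^ 2 * c ^ 2 / 8) := by
    calc ∫ ω, f T ω ∂P ≤ ∫ ω, Real.exp (lam ^ 2 * c ^ 2 / 8) * M T ω ∂P :=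
          integral_mono (hfint T) ((hMint T).const_mul _) hfTbd
    _ = Real.exp (lam ^ 2 * c ^ 2 / 8) * ∫ ω, M T ω ∂P := integral_const_mul _ _
    _ ≤ Real.exp (lam ^ 2 * c ^ 2 / 8) * 1 :=
        mul_le_mul_of_nonneg_left (hMle T) (Real.exp_pos _).le
    _ = Real.exp (lam ^ 2 * c ^ 2 / 8) := mul_one _
  set ε : NNReal := (Real.exp (lam * b)).toNNReal with hε_def
  have hεcoe : (ε : ℝ) = Real.exp (lam * b) := Real.coe_toNNReal _ (Real.exp_pos _).le
  -- event inclusion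
  have hincl : {ω | ∃ t ∈ Finset.Icc 1 T,
      b ≤ ∑ s ∈ Finset.Icc 1 t, X s ω ∧
      ∑ s ∈ Finset.Icc 1 t, (U s ω - L s ω) ^ 2 ≤ c ^ 2} ⊆
      {ω | (ε : ℝ) ≤ (Finset.range (T + 1)).sup' Finset.nonempty_range_add_one fun k => f k ω} := by
    intro ω hω
    obtain ⟨t, ht, hbS, hV⟩ := hω
    have htmem : t ∈ Finset.range (T + 1) := by
      rw [Finset.mem_range, Nat.lt_succ_iff]
      exact (Finset.mem_Icc.1 ht).2
    have hS'eq : S' t ω = ∑ s ∈ Finset.Icc 1 t, X s ω := by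
      refine Finset.sum_congr rfl fun s hs => ?_
      have hs' := Finset.mem_Icc.1 hs
      have hsT : s ∈ Finset.Icc 1 T := by
        rw [Finset.mem_Icc]
        exact ⟨hs'.1, hs'.2.trans (Finset.mem_Icc.1 ht).2⟩
      have hVs : V s ω ≤ c ^ 2 := (hVmono s t hs'.2 ω).trans hV
      simp only [hX'_def, hsT, hVs, and_self, if_pos]
    rw [Set.mem_setOf_eq, hεcoe]
    refine le_trans ?_ (Finset.le_sup' (fun k => f k ω) htmem)
    simp only [hf_def]
    rw [hS'eq]
    exact Real.exp_le_exp.2 (mul_le_mul_of_nonneg_left hbS hlam.le)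
  have hfnonneg : 0 ≤ f := fun t ω => (Real.exp_pos _).le
  have hdoob := maximal_ineq hsubmart hfnonneg (ε := ε) T
  -- conclude
  have h1 : P {ω | (ε : ℝ) ≤ (Finset.range (T + 1)).sup' Finset.nonempty_range_add_one
      fun k => f k ω} ≤ ENNReal.ofReal (Real.exp (-2 * b ^ 2 / c ^ 2)) := by
    have h2 : ENNReal.ofReal (Real.exp (lam * b)) *
        P {ω | (ε : ℝ) ≤ (Finset.range (T + 1)).sup' Finset.nonempty_range_add_one
          fun k => f k ω} ≤ ENNReal.ofReal (Real.exp (lam ^ 2 * c ^ 2 / 8)) := by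
      have h3 := hdoob
      have h4 : (ε : ℝ≥0∞) = ENNReal.ofReal (Real.exp (lam * b)) := by
        rw [hε_def]; rfl
      rw [h4] at h3
      refine h3.trans ?_
      apply ENNReal.ofReal_le_ofReal
      refine le_trans ?_ hintfT
      exact setIntegral_le_integral (hfint T)
        (Filter.Eventually.of_forall fun ω => (Real.exp_pos _).le)
    have h5 : P {ω | (ε : ℝ) ≤ (Finset.range (T + 1)).sup' Finset.nonempty_range_add_one
        fun k => f k ω} ≤ ENNReal.ofReal (Real.exp (lam ^ 2 * c ^ 2 / 8)) /
          ENNReal.ofReal (Real.exp (lam * b)) := by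
      rw [ENNReal.le_div_iff_mul_le
        (Or.inl (by simp [Real.exp_pos])) (Or.inl ENNReal.ofReal_ne_top)]
      rw [mul_comm]
      exact h2
    refine h5.trans ?_
    rw [← ENNReal.ofReal_div_of_pos (Real.exp_pos _), ← Real.exp_sub]
    apply ENNReal.ofReal_le_ofReal
    apply Real.exp_le_exp.2
    have : lam ^ 2 * c ^ 2 / 8 - lam * b = -2 * b ^ 2 / c ^ 2 := by
      rw [hlam_def]
      field_simp
      ring
    rw [this]
  exact (measure_mono hincl).trans h1

end Auxiliary

/-- Hoeffding-type maximal inequality for martingale difference sequences with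
predictable bounds (van de Geer 2002). -/
theorem stmt_12 {Ω : Type*} {m0 : MeasurableSpace Ω} (P : Measure Ω)
    [IsProbabilityMeasure P] (F : Filtration ℕ m0) (T : ℕ)
    (X L U : ℕ → Ω → ℝ) (hadapted : Adapted F X)
    (hint : ∀ t, Integrable (X t) P)
    (hcond : ∀ t ∈ Finset.Icc 1 T, P[X t | F (t - 1)] =ᵐ[P] 0)
    (hLpred : ∀ t ∈ Finset.Icc 1 T, StronglyMeasurable[F (t - 1)] (L t))
    (hUpred : ∀ t ∈ Finset.Icc 1 T, StronglyMeasurable[F (t - 1)] (U t))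
    (hbound : ∀ t ∈ Finset.Icc 1 T, ∀ᵐ ω ∂P, L t ω ≤ X t ω ∧ X t ω ≤ U t ω)
    (b c : ℝ) (hb : 0 < b) (hc : 0 < c) :
    (P {ω | ∃ t ∈ Finset.Icc 1 T,
        b ≤ |∑ s ∈ Finset.Icc 1 t, X s ω| ∧
        ∑ s ∈ Finset.Icc 1 t, (U s ω - L s ω) ^ 2 ≤ c ^ 2}).toReal ≤
      2 * Real.exp (-2 * b ^ 2 / c ^ 2) := by
  have hpos := oneSided P F T X L U hadapted hint hcond hLpred hUpred hbound b c hb hc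
  -- the negated process
  have hcondn : ∀ t ∈ Finset.Icc 1 T, P[(fun ω => -X t ω) | F (t - 1)] =ᵐ[P] 0 := by
    intro t ht
    have h1 : (fun ω => -X t ω) = -X t := rfl
    rw [h1]
    refine (condExp_neg (X t) _).trans ?_
    filter_upwards [hcond t ht] with ω hω
    simp only [Pi.neg_apply, hω, Pi.zero_apply, neg_zero]
  have hneg := oneSided P F T (fun t ω => -X t ω) (fun t ω => -U t ω) (fun t ω => -L t ω)
    (fun t => (hadapted t).neg) (fun t => (hint t).neg) hcondn
    (fun t ht => (hUpred t ht).neg) (fun t ht => (hLpred t ht).neg)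
    (fun t ht => (hbound t ht).mono fun ω h => ⟨by simp only [neg_le_neg_iff]; exact h.2, by simp only [neg_le_neg_iff]; exact h.1⟩)
    b c hb hc
  -- union bound
  have hincl : {ω | ∃ t ∈ Finset.Icc 1 T,
      b ≤ |∑ s ∈ Finset.Icc 1 t, X s ω| ∧
      ∑ s ∈ Finset.Icc 1 t, (U s ω - L s ω) ^ 2 ≤ c ^ 2} ⊆
      {ω | ∃ t ∈ Finset.Icc 1 T,
        b ≤ ∑ s ∈ Finset.Icc 1 t, X s ω ∧
        ∑ s ∈ Finset.Icc 1 t, (U s ω - L s ω) ^ 2 ≤ c ^ 2} ∪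
      {ω | ∃ t ∈ Finset.Icc 1 T,
        b ≤ ∑ s ∈ Finset.Icc 1 t, (fun ω => -X s ω) ω ∧
        ∑ s ∈ Finset.Icc 1 t, ((fun ω => -L s ω) ω - (fun ω => -U s ω) ω) ^ 2 ≤ c ^ 2} := by
    intro ω hω
    obtain ⟨t, ht, habs, hV⟩ := hω
    rcases le_abs.1 habs with h | h
    · exact Or.inl ⟨t, ht, h, hV⟩
    · refine Or.inr ⟨t, ht, ?_, ?_⟩
      · simp only [Finset.sum_neg_distrib]
        exact h
      · refine le_trans (le_of_eq (Finset.sum_congr rfl fun s _ => by ring)) hV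
  have hle : P {ω | ∃ t ∈ Finset.Icc 1 T,
      b ≤ |∑ s ∈ Finset.Icc 1 t, X s ω| ∧
      ∑ s ∈ Finset.Icc 1 t, (U s ω - L s ω) ^ 2 ≤ c ^ 2} ≤
      ENNReal.ofReal (2 * Real.exp (-2 * b ^ 2 / c ^ 2)) := by
    refine le_trans (measure_mono hincl) ?_
    refine le_trans (measure_union_le _ _) ?_
    refine le_trans (add_le_add hpos hneg) ?_
    rw [← ENNReal.ofReal_add (Real.exp_nonneg _) (Real.exp_nonneg _)]
    apply ENNReal.ofReal_le_ofReal
    linarith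
  exact ENNReal.toReal_le_of_le_ofReal (by positivity) hle
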